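/- Let x_R < m be points of an interval ℐ, let h₁, h₂ : ℐ → (0,∞) be differentiable with h₁'(x_R)h₂(x_R) − h₁(x_R)h₂'(x_R) = γ·S'(x_R) for constants γ > 0 and S'(x_R) > 0, and suppose D := h₁(m)h₂(x_R) − h₁(x_R)h₂(m) > 0. Let R(x_R), R'(x_R), G(m) be reals satisfying the smooth-fit relation R'(x_R) = (h₁'(x_R)/h₁(x_R))·R(x_R), and let H(m) > 0, σ²(x_R) > 0, L(x_R) < 0. Define E(x_R,m) = (H(m)σ²(x_R)/(2L(x_R)h₂(x_R)))·{ (γS'(x_R)/D)·[R(x_R)h₂(m) − G(m)h₂(x_R)] + R'(x_R)h₂(x_R) − R(x_R)h₂'(x_R) }. Then E(x_R,m) has the same sign as h₁(x_R)G(m) − h₁(m)R(x_R); in particular E(x_R,m) > 0 if and only if (h₁(x_R)/h₁(m))·G(m) > R(x_R). -/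

import Mathlib

/-- sign of the vector field `E` at `(x_R, m)` under the smooth-fit relation.
`E(x_R,m)` has the same sign as `h₁(x_R)G(m) − h₁(m)R(x_R)`; in particular
`E(x_R,m) > 0 ↔ (h₁(x_R)/h₁(m))·G(m) > R(x_R)`. -/
theorem stmt_7
    (xR m : ℝ) (hxm : xR < m)
    (h1xR h1m h2xR h2m h1'xR h2'xR γ S'xR RxR R'xR Gm Hm σ2 LxR D E : ℝ)
    (h1xRpos : 0 < h1xR) (h1mpos : 0 < h1m) (h2xRpos : 0 < h2xR) (h2mpos : 0 < h2m)
    (hγ : 0 < γ) (hS' : 0 < S'xR)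
    (hWr : h1'xR * h2xR - h1xR * h2'xR = γ * S'xR)
    (hD : D = h1m * h2xR - h1xR * h2m) (hDpos : 0 < D)
    (hsf : R'xR = (h1'xR / h1xR) * RxR)
    (hH : 0 < Hm) (hσ : 0 < σ2) (hL : LxR < 0)
    (hE : E = (Hm * σ2 / (2 * LxR * h2xR)) *
      ((γ * S'xR / D) * (RxR * h2m - Gm * h2xR) + R'xR * h2xR - RxR * h2'xR)) :
    Real.sign E = Real.sign (h1xR * Gm - h1m * RxR) ∧
      (0 < E ↔ RxR < (h1xR / h1m) * Gm) := by
  have hLne : LxR ≠ 0 := ne_of_lt hL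
  have h1ne : h1xR ≠ 0 := ne_of_gt h1xRpos
  have h2ne : h2xR ≠ 0 := ne_of_gt h2xRpos
  have step : R'xR * h2xR - RxR * h2'xR = γ * S'xR * RxR / h1xR := by
    rw [hsf, eq_div_iff h1ne]
    field_simp
    linear_combination RxR * hWr
  have hcpos : 0 < Hm * σ2 * γ * S'xR / (2 * (-LxR) * D * h1xR) := by
    have hLpos : 0 < -LxR := neg_pos.mpr hL
    apply div_pos <;> positivity
  set c : ℝ := Hm * σ2 * γ * S'xR / (2 * (-LxR) * D * h1xR) with hc
  have key : E = c * (h1xR * Gm - h1m * RxR) := by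
    subst hD
    have hDne : h1m * h2xR - h1xR * h2m ≠ 0 := ne_of_gt hDpos
    rw [hE, add_sub_assoc, step, hc]
    field_simp
    have hX : -(h1xR * h2m) + h2xR * h1m ≠ 0 := by
      intro h0; apply hDne; linarith
    linear_combination (-RxR) * mul_inv_cancel₀ hX
  have hiff : 0 < E ↔ 0 < h1xR * Gm - h1m * RxR := by
    rw [key]
    constructor
    · intro h
      by_contra hcon
      push_neg at hcon
      nlinarith
    · exact fun h => mul_pos hcpos h
  constructor
  · rw [key]
    rcases lt_trichotomy (h1xR * Gm - h1m * RxR) 0 with h | h | h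
    · rw [Real.sign_of_neg h, Real.sign_of_neg (mul_neg_of_pos_of_neg hcpos h)]
    · rw [h, mul_zero]
    · rw [Real.sign_of_pos h, Real.sign_of_pos (mul_pos hcpos h)]
  · rw [hiff, div_mul_eq_mul_div, lt_div_iff₀ h1mpos]
    constructor <;> intro h <;> nlinarith
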